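/- In the lexicographic order on functions s : ω₁ → 2 of countable support whose support has a largest element, between any two distinct elements there is a third: this order is densely ordered. -/

import Mathlib

/-- The ordinal `ω₁`, realized as the set of ordinals below `(ℵ₁).ord`. -/
def OmegaOne : Type 1 := {o : Ordinal // o < (Cardinal.aleph 1).ord}

noncomputable instance : LinearOrder OmegaOne := Subtype.instLinearOrder _

/-- `S(ω₁)`: functions `s : ω₁ → 2` with countable support whose support has a
largest element. -/
def SOmegaOne : Type 1 :=
  {f : OmegaOne → Fin 2 //
    (Function.support f).Countable ∧
      ∃ m ∈ Function.support f, ∀ a ∈ Function.support f, a ≤ m}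

/-- The lexicographic order on `S(ω₁)`: `s < t` iff `s α < t α` at the least
`α` where they differ. -/
def SOmegaOneLt (s t : SOmegaOne) : Prop :=
  ∃ α : OmegaOne, s.1 α < t.1 α ∧ ∀ β : OmegaOne, β < α → s.1 β = t.1 β

open Cardinal Set Function in
/-- Initial segments of `ω₁` are countable. -/
lemma omegaOne_Iic_countable (α : OmegaOne) : {x : OmegaOne | x ≤ α}.Countable := by
  rw [← Set.countable_coe_iff, ← Cardinal.mk_le_aleph0_iff]
  have h1 : α.1 + 1 < (Cardinal.aleph 1).ord :=
    (Cardinal.isSuccLimit_ord (Cardinal.aleph0_le_aleph 1)).succ_lt α.2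
  have h2 : (α.1 + 1).card ≤ Cardinal.aleph0 := by
    have h := Cardinal.lt_ord.1 h1
    exact Order.lt_succ_iff.mp (lt_of_lt_of_eq h Cardinal.succ_aleph0.symm)
  have hinj : #{x : OmegaOne | x ≤ α} ≤ #(Set.Iio (α.1 + 1)) := by
    refine Cardinal.mk_le_of_injective (f := fun x => ⟨x.1.1, ?_⟩) ?_
    · have hx : x.1.1 ≤ α.1 := x.2
      exact lt_of_le_of_lt hx (lt_add_one _)
    · rintro ⟨⟨x, hx⟩, hx'⟩ ⟨⟨y, hy⟩, hy'⟩ h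
      simp only [Subtype.mk.injEq] at h
      cases h; rfl
  refine le_trans hinj ?_
  rw [Ordinal.mk_Iio_ordinal, ← Cardinal.lift_aleph0.{1, 0}]
  exact Cardinal.lift_le.2 h2

open Cardinal Set Function in
lemma omegaOne_univ_not_countable : ¬ (Set.univ : Set OmegaOne).Countable := by
  rw [← Set.countable_coe_iff, ← Cardinal.mk_le_aleph0_iff]
  intro h
  rw [Cardinal.mk_univ] at h
  have h1 : #OmegaOne = #(Set.Iio ((Cardinal.aleph 1).ord)) := rfl
  rw [h1, Ordinal.mk_Iio_ordinal, Cardinal.card_ord, ← Cardinal.lift_aleph0.{1, 0}] at h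
  exact absurd (Cardinal.lift_le.1 h) (not_le.mpr Cardinal.aleph0_lt_aleph_one)

/-- The lexicographic order on `S(ω₁)` is dense: between any two distinct
elements there is a third. -/
theorem sOmegaOne_densely_ordered :
    ∀ s t : SOmegaOne, SOmegaOneLt s t →
      ∃ u : SOmegaOne, SOmegaOneLt s u ∧ SOmegaOneLt u t := by
  rintro s t ⟨α, hlt, hagree⟩
  have fin2 : ∀ a b : Fin 2, a < b → a = 0 ∧ b = 1 := by decide
  have fin2' : ∀ a : Fin 2, a ≠ 0 → a = 1 := by decide
  obtain ⟨hs0, ht1⟩ := fin2 _ _ hlt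
  by_cases hcase : ∃ β, α < β ∧ t.1 β ≠ 0
  · -- t has support above α; cut t off at α
    set u : OmegaOne → Fin 2 := fun x => if x ≤ α then t.1 x else 0 with hu
    have hsupp : Function.support u ⊆ Function.support t.1 := by
      intro x hx
      simp only [Function.mem_support, hu] at hx ⊢
      intro h; apply hx; split <;> simp [h]
    have huc : (Function.support u).Countable := t.2.1.mono hsupp
    have huα : u α = 1 := by simp [hu, ht1]
    have hmax : ∃ m ∈ Function.support u, ∀ a ∈ Function.support u, a ≤ m := by
      refine ⟨α, by simp [Function.mem_support, huα], fun a ha => ?_⟩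
      by_contra h
      push_neg at h
      simp [Function.mem_support, hu, not_le.mpr h] at ha
    refine ⟨⟨u, huc, hmax⟩, ⟨α, ?_, fun β hβ => ?_⟩, ?_⟩
    · show s.1 α < u α
      rw [huα, hs0]; decide
    · show s.1 β = u β
      simp [hu, le_of_lt hβ, hagree β hβ]
    · -- u < t at the least support point of t above α
      have hwf : WellFounded ((· < ·) : OmegaOne → OmegaOne → Prop) :=
        (Subtype.wellFoundedLT (fun o => o < (Cardinal.aleph 1).ord)).wf
      obtain ⟨β, ⟨hβα, hβne⟩, hβmin⟩ := hwf.has_min {β | α < β ∧ t.1 β ≠ 0} hcase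
      refine ⟨β, ?_, fun γ hγ => ?_⟩
      · show u β < t.1 β
        have : u β = 0 := by simp [hu, not_le.mpr hβα]
        rw [this, fin2' _ hβne]; decide
      · show u γ = t.1 γ
        by_cases hγα : γ ≤ α
        · simp [hu, hγα]
        · push_neg at hγα
          have : t.1 γ = 0 := by
            by_contra h
            exact hβmin γ ⟨hγα, h⟩ hγ
          simp [hu, not_le.mpr hγα, this]
  · -- t vanishes above α; extend s by a 1 far out
    push_neg at hcase
    obtain ⟨γ, hγ⟩ : ∃ γ : OmegaOne, γ ∉ {x : OmegaOne | x ≤ α} ∪ Function.support s.1 := by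
      by_contra h
      push_neg at h
      have : (Set.univ : Set OmegaOne).Countable := by
        have : (Set.univ : Set OmegaOne) ⊆ {x : OmegaOne | x ≤ α} ∪ Function.support s.1 :=
          fun x _ => h x
        exact ((omegaOne_Iic_countable α).union s.2.1).mono this
      exact omegaOne_univ_not_countable this
    simp only [Set.mem_union, Set.mem_setOf_eq, Function.mem_support, not_or, not_not,
      not_le] at hγ
    obtain ⟨hαγ, hsγ⟩ := hγ
    set u : OmegaOne → Fin 2 := fun x => if x < γ then s.1 x else if x = γ then 1 else 0 with hu
    have hsupp : Function.support u ⊆ Function.support s.1 ∪ {γ} := by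
      intro x hx
      simp only [Function.mem_support, hu] at hx
      by_cases h1 : x < γ
      · simp only [h1, if_true] at hx
        exact Or.inl hx
      · by_cases h2 : x = γ
        · exact Or.inr h2
        · simp [h1, h2] at hx
    have huc : (Function.support u).Countable :=
      (s.2.1.union (Set.countable_singleton γ)).mono hsupp
    have huγ : u γ = 1 := by simp [hu]
    have hmax : ∃ m ∈ Function.support u, ∀ a ∈ Function.support u, a ≤ m := by
      refine ⟨γ, by simp [Function.mem_support, huγ], fun a ha => ?_⟩
      by_contra h
      push_neg at h
      simp [Function.mem_support, hu, not_lt.mpr (le_of_lt h), (ne_of_gt h)] at ha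
    refine ⟨⟨u, huc, hmax⟩, ⟨γ, ?_, fun β hβ => ?_⟩, ⟨α, ?_, fun β hβ => ?_⟩⟩
    · show s.1 γ < u γ
      rw [huγ, hsγ]; decide
    · show s.1 β = u β
      simp [hu, hβ]
    · show u α < t.1 α
      have : u α = 0 := by rw [hu]; simp only [hαγ, if_true]; exact hs0
      rw [this, ht1]; decide
    · show u β = t.1 β
      have : u β = s.1 β := by simp [hu, hβ.trans hαγ]
      rw [this, hagree β hβ]
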